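/- arXiv:1109.0466 — 2 statements merged into one kernel-verified Lean document; each statement's English description precedes it below -/
import Mathlib

section
/- Let 1 ≤ n < d be integers and let A : ℝⁿ → ℝ^{d−n} be a Lipschitz function with Lipschitz constant Lip(A) < 1, and let Γ = {(y, A(y)) : y ∈ ℝⁿ} ⊂ ℝ^d be its graph. Then there exists C > 0, depending only on n, d and Lip(A), such that for every z ∈ Γ and all 0 < a ≤ b: H^n( Γ ∩ {y ∈ ℝ^d : a ≤ |y − z| ≤ b} ) ≤ C (b − a) b^{n−1}, where H^n is n-dimensional Hausdorff measure. -/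
open MeasureTheory Metric Set
open scoped ENNReal NNReal

noncomputable section

abbrev Rd (d : ℕ) := EuclideanSpace ℝ (Fin d)

/-- The support of a Borel measure on `ℝ^d`. -/
def msupport {d : ℕ} (μ : Measure (Rd d)) : Set (Rd d) :=
  {x | ∀ r : ℝ, 0 < r → 0 < μ (ball x r)}

/-- `μ` is an `n`-dimensional Ahlfors–David regular measure. -/
def IsADRegular {d : ℕ} (n : ℕ) (μ : Measure (Rd d)) : Prop :=
  ∃ C : ℝ, 0 < C ∧ ∀ x ∈ msupport μ, ∀ r : ℝ, 0 < r →
    ENNReal.ofReal r ≤ EMetric.diam (msupport μ) →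
    ENNReal.ofReal (C⁻¹ * r ^ n) ≤ μ (closedBall x r) ∧
      μ (closedBall x r) ≤ ENNReal.ofReal (C * r ^ n)

/-- `μ` is uniformly `n`-rectifiable. -/
def IsUnifRectifiable {d : ℕ} (n : ℕ) (μ : Measure (Rd d)) : Prop :=
  ∃ θ : ℝ, 0 < θ ∧ ∃ M : ℝ≥0, 0 < M ∧
    ∀ x ∈ msupport μ, ∀ r : ℝ, 0 < r →
      ENNReal.ofReal r ≤ EMetric.diam (msupport μ) →
      ∃ g : EuclideanSpace ℝ (Fin n) → Rd d, LipschitzWith M g ∧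
        ENNReal.ofReal (θ * r ^ n) ≤
          μ (ball x r ∩ g '' ball (0 : EuclideanSpace ℝ (Fin n)) r)

/-- An admissible odd Calderón–Zygmund kernel of homogeneity `-n` on `ℝ^d`. -/
structure AdmissibleKernel {d : ℕ} (n : ℕ) (K : Rd d → ℝ) : Prop where
  odd : ∀ x : Rd d, x ≠ 0 → K (-x) = -K x
  smooth : ContDiffOn ℝ 2 K {(0 : Rd d)}ᶜ
  bounds : ∃ C : ℝ, 0 < C ∧ ∀ x : Rd d, x ≠ 0 →
    |K x| ≤ C / ‖x‖ ^ n ∧ ‖fderiv ℝ K x‖ ≤ C / ‖x‖ ^ (n + 1) ∧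
      ‖fderiv ℝ (fderiv ℝ K) x‖ ≤ C / ‖x‖ ^ (n + 2)

/-- An admissible truncation profile `φ_ℝ`. -/
structure TruncProfile (φ : ℝ → ℝ) : Prop where
  smooth : ContDiffOn ℝ 2 φ (Ici 0)
  mono : MonotoneOn φ (Ici 0)
  nonneg : ∀ t : ℝ, 0 ≤ t → 0 ≤ φ t
  le_one : ∀ t : ℝ, 0 ≤ t → φ t ≤ 1
  eq_zero : ∀ t : ℝ, 0 ≤ t → t < 1 / 4 → φ t = 0
  one_le : ∀ t : ℝ, 4 ≤ t → 1 ≤ φ t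
  deriv_lb : ∃ c : ℝ, 0 < c ∧ ∀ t ∈ Icc (1 / 3 : ℝ) 3, c ≤ |deriv φ t|

/-- The `ρ`-variation of a family `{F_ε}_{ε>0}` (evaluated at a point). -/
def varFam {E : Type*} [NormedAddCommGroup E] (ρ : ℝ) (F : ℝ → E) : ℝ≥0∞ :=
  ⨆ (ε : ℤ → ℝ) (_ : StrictAnti ε) (_ : ∀ m : ℤ, 0 < ε m),
    (∑' m : ℤ, ENNReal.ofReal ‖F (ε (m + 1)) - F (ε m)‖ ^ ρ) ^ (1 / ρ)

/-- Sharply truncated singular integral `T_ε^μ f`. -/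
def truncT {d : ℕ} (K : Rd d → ℝ) (μ : Measure (Rd d)) (f : Rd d → ℝ) (ε : ℝ)
    (x : Rd d) : ℝ :=
  ∫ y in {y : Rd d | ε < dist x y}, K (x - y) * f y ∂μ

/-- The `n`-dimensional Riesz kernel `x/|x|^{n+1}`. -/
def rieszK {d : ℕ} (n : ℕ) (x : Rd d) : Rd d := (‖x‖ ^ (n + 1))⁻¹ • x

/-- Sharply truncated Riesz transform `R_ε^μ f`. -/
def truncR {d : ℕ} (n : ℕ) (μ : Measure (Rd d)) (f : Rd d → ℝ) (ε : ℝ) (x : Rd d) : Rd d :=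
  ∫ y in {y : Rd d | ε < dist x y}, f y • rieszK n (x - y) ∂μ

/-- Smoothly truncated singular integral `T_{φ_ε}^μ f`. -/
def smoothT {d : ℕ} (K : Rd d → ℝ) (φ : ℝ → ℝ) (μ : Measure (Rd d)) (f : Rd d → ℝ)
    (ε : ℝ) (x : Rd d) : ℝ :=
  ∫ y, φ (‖x - y‖ ^ 2 / ε ^ 2) * K (x - y) * f y ∂μ

/-- Smoothly truncated Riesz transform `T_{φ_ε}^μ f` with `K(x)=x/|x|^{n+1}`. -/
def smoothR {d : ℕ} (n : ℕ) (φ : ℝ → ℝ) (μ : Measure (Rd d)) (f : Rd d → ℝ)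
    (ε : ℝ) (x : Rd d) : Rd d :=
  ∫ y, (φ (‖x - y‖ ^ 2 / ε ^ 2) * f y) • rieszK n (x - y) ∂μ

/-- Smoothly truncated singular integral `T_{φ_ε}ν` of a finite signed measure `ν`. -/
def smoothTM {d : ℕ} (K : Rd d → ℝ) (φ : ℝ → ℝ) (ν : SignedMeasure (Rd d)) (ε : ℝ)
    (x : Rd d) : ℝ :=
  (∫ y, φ (‖x - y‖ ^ 2 / ε ^ 2) * K (x - y) ∂ν.toJordanDecomposition.posPart) -
    ∫ y, φ (‖x - y‖ ^ 2 / ε ^ 2) * K (x - y) ∂ν.toJordanDecomposition.negPart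

/-- Total variation norm `‖ν‖` of a finite signed measure. -/
def tvNorm {d : ℕ} (ν : SignedMeasure (Rd d)) : ℝ≥0∞ :=
  ν.totalVariation Set.univ

/-- The graph map `y ↦ (y, A(y))` of `A : ℝ^n → ℝ^{d-n}` inside `ℝ^d`. -/
def graphFun {d : ℕ} (n : ℕ) (A : EuclideanSpace ℝ (Fin n) → EuclideanSpace ℝ (Fin (d - n)))
    (y : EuclideanSpace ℝ (Fin n)) : Rd d :=
  (WithLp.equiv 2 (∀ _ : Fin d, ℝ)).symm fun i =>
    if hi : (i : ℕ) < n then y ⟨(i : ℕ), hi⟩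
    else A y ⟨(i : ℕ) - n, by have := i.isLt; omega⟩

/-- `Γ` is an `n`-dimensional Lipschitz graph in `ℝ^d` with maximal slope at most `L`. -/
def IsLipschitzGraph {d : ℕ} (n : ℕ) (L : ℝ≥0) (Γ : Set (Rd d)) : Prop :=
  ∃ (T : Rd d ≃ᵢ Rd d) (A : EuclideanSpace ℝ (Fin n) → EuclideanSpace ℝ (Fin (d - n))),
    LipschitzWith L A ∧ Γ = T '' Set.range (graphFun n A)


/-! ### Auxiliary lemmas for Statement 12 -/

set_option maxHeartbeats 1000000 in
private lemma key_real12 (L t₁ t₂ u₁ u₂ s₁ s₂ r₁ r₂ I D P : ℝ)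
    (hL0 : 0 ≤ L) (hL1 : L < 1)
    (ht₁ : 0 < t₁) (ht₂ : 0 < t₂)
    (hu₁0 : 0 ≤ u₁) (hu₂0 : 0 ≤ u₂)
    (hu₁ : u₁ ≤ L * t₁) (hu₂ : u₂ ≤ L * t₂)
    (hs₁ : 0 ≤ s₁) (hs₂ : 0 ≤ s₂)
    (hsq₁ : s₁^2 = t₁^2 + u₁^2) (hsq₂ : s₂^2 = t₂^2 + u₂^2)
    (hr₁ : s₁ = r₁ * t₁) (hr₂ : s₂ = r₂ * t₂)
    (hI : I ≤ t₁ * t₂)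
    (hD0 : 0 ≤ D) (hP0 : 0 ≤ P)
    (hD : D^2 = t₁^2 + t₂^2 - 2*I)
    (hP : P^2 = (r₁*t₁)^2 + (r₂*t₂)^2 - 2*(r₁*r₂)*I)
    (habs : |u₁ - u₂| ≤ L * D) :
    (1 - L^2) * D ≤ 3 * P := by
  have hu₁t : u₁ ≤ t₁ := le_trans hu₁ (mul_le_of_le_one_left ht₁.le hL1.le)
  have hu₂t : u₂ ≤ t₂ := le_trans hu₂ (mul_le_of_le_one_left ht₂.le hL1.le)
  have husq₁ : u₁^2 ≤ t₁^2 := pow_le_pow_left₀ hu₁0 hu₁t 2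
  have husq₂ : u₂^2 ≤ t₂^2 := pow_le_pow_left₀ hu₂0 hu₂t 2
  have hts₁ : t₁ ≤ s₁ := by
    apply le_of_pow_le_pow_left₀ two_ne_zero hs₁; linarith [sq_nonneg u₁]
  have hts₂ : t₂ ≤ s₂ := by
    apply le_of_pow_le_pow_left₀ two_ne_zero hs₂; linarith [sq_nonneg u₂]
  have hst₁ : s₁ ≤ 2 * t₁ := by
    apply le_of_pow_le_pow_left₀ two_ne_zero (by positivity)
    have : (2*t₁)^2 = 4*t₁^2 := by ring
    linarith [sq_nonneg t₁]
  have hst₂ : s₂ ≤ 2 * t₂ := by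
    apply le_of_pow_le_pow_left₀ two_ne_zero (by positivity)
    have : (2*t₂)^2 = 4*t₂^2 := by ring
    linarith [sq_nonneg t₂]
  have hr₁1 : 1 ≤ r₁ := by
    rw [← mul_le_mul_iff_left₀ ht₁, one_mul, ← hr₁]; exact hts₁
  have hr₂1 : 1 ≤ r₂ := by
    rw [← mul_le_mul_iff_left₀ ht₂, one_mul, ← hr₂]; exact hts₂
  have hcs : 0 ≤ t₁*t₂ - I := sub_nonneg.2 hI
  -- step 1 : |s₁ - s₂| ≤ P
  have hstep1 : |s₁ - s₂| ≤ P := by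
    apply le_of_pow_le_pow_left₀ two_ne_zero hP0
    rw [sq_abs]
    have e : P^2 - (r₁*t₁ - r₂*t₂)^2 = 2*(r₁*r₂)*(t₁*t₂ - I) := by rw [hP]; ring
    have e2 : (s₁ - s₂)^2 = (r₁*t₁ - r₂*t₂)^2 := by rw [hr₁, hr₂]
    have hr₁0 : (0:ℝ) ≤ r₁ := le_trans zero_le_one hr₁1
    have hr₂0 : (0:ℝ) ≤ r₂ := le_trans zero_le_one hr₂1
    have h := mul_nonneg (by positivity : (0:ℝ) ≤ 2*(r₁*r₂)) hcs
    linarith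
  -- step 2 : D^2 ≤ (t₁ - t₂)^2 + P^2
  have hstep2 : D^2 ≤ (t₁ - t₂)^2 + P^2 := by
    have e : P^2 - 2*(t₁*t₂ - I) = (r₁*t₁ - r₂*t₂)^2 + 2*(r₁*r₂ - 1)*(t₁*t₂ - I) := by
      rw [hP]; ring
    have hrr : (1:ℝ) ≤ r₁*r₂ := by
      have := mul_le_mul hr₁1 hr₂1 zero_le_one (le_trans zero_le_one hr₁1)
      linarith
    have h := mul_nonneg (mul_nonneg (by norm_num : (0:ℝ) ≤ 2) (by linarith : (0:ℝ) ≤ r₁*r₂ - 1)) hcs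
    have h2 := sq_nonneg (r₁*t₁ - r₂*t₂)
    linarith
  -- step 3 : |t₁ - t₂| ≤ 2 * |s₁ - s₂| + L^2 * D
  have hstep3 : |t₁ - t₂| ≤ 2 * |s₁ - s₂| + L^2 * D := by
    have h1 : |t₁ - t₂| * (t₁ + t₂) ≤ (2 * |s₁ - s₂| + L^2 * D) * (t₁ + t₂) := by
      have e1 : |t₁^2 - t₂^2| = |t₁ - t₂| * (t₁ + t₂) := by
        rw [show t₁^2 - t₂^2 = (t₁ - t₂) * (t₁ + t₂) by ring, abs_mul,
          abs_of_nonneg (by linarith : (0:ℝ) ≤ t₁ + t₂)]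
      have e2 : |s₁^2 - s₂^2| = |s₁ - s₂| * (s₁ + s₂) := by
        rw [show s₁^2 - s₂^2 = (s₁ - s₂) * (s₁ + s₂) by ring, abs_mul,
          abs_of_nonneg (by linarith : (0:ℝ) ≤ s₁ + s₂)]
      have e3 : |u₁^2 - u₂^2| ≤ (L * D) * (L * (t₁ + t₂)) := by
        rw [show u₁^2 - u₂^2 = (u₁ - u₂) * (u₁ + u₂) by ring, abs_mul,
          abs_of_nonneg (by positivity : (0:ℝ) ≤ u₁ + u₂)]
        exact mul_le_mul habs (by linarith) (by positivity) (by positivity)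
      have e4 : |t₁^2 - t₂^2| ≤ |s₁^2 - s₂^2| + |u₁^2 - u₂^2| := by
        have heq : t₁^2 - t₂^2 = (s₁^2 - s₂^2) + (u₂^2 - u₁^2) := by
          rw [hsq₁, hsq₂]; ring
        rw [heq]
        calc |s₁^2 - s₂^2 + (u₂^2 - u₁^2)| ≤ |s₁^2 - s₂^2| + |u₂^2 - u₁^2| := abs_add_le _ _
          _ = |s₁^2 - s₂^2| + |u₁^2 - u₂^2| := by rw [abs_sub_comm (u₂^2)]
      have e5 : |s₁ - s₂| * (s₁ + s₂) ≤ |s₁ - s₂| * (2 * (t₁ + t₂)) :=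
        mul_le_mul_of_nonneg_left (by linarith) (abs_nonneg _)
      calc |t₁ - t₂| * (t₁ + t₂) = |t₁^2 - t₂^2| := e1.symm
        _ ≤ |s₁^2 - s₂^2| + |u₁^2 - u₂^2| := e4
        _ ≤ |s₁ - s₂| * (s₁ + s₂) + (L * D) * (L * (t₁ + t₂)) := by rw [e2]; linarith
        _ ≤ (2 * |s₁ - s₂| + L^2 * D) * (t₁ + t₂) := by
            have h6 : (L * D) * (L * (t₁ + t₂)) = (L^2 * D) * (t₁ + t₂) := by ring
            have e6 : (2 * |s₁ - s₂| + L^2 * D) * (t₁ + t₂)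
                = |s₁ - s₂| * (2 * (t₁ + t₂)) + (L^2 * D) * (t₁ + t₂) := by ring
            linarith
    exact le_of_mul_le_mul_right h1 (by linarith)
  have hT : |t₁ - t₂| ≤ 2 * P + L^2 * D := by linarith
  have h2 : D^2 ≤ (2*P + L^2*D)^2 + P^2 := by
    have h3 : (t₁ - t₂)^2 ≤ (2*P + L^2*D)^2 := by
      rw [← sq_abs (t₁ - t₂)]
      apply pow_le_pow_left₀ (abs_nonneg _) hT
    linarith
  -- final combination, avoiding nlinarith
  obtain ⟨c, hc⟩ : ∃ c : ℝ, c = 1 - L^2 := ⟨_, rfl⟩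
  rw [← hc]
  have hc0 : 0 < c := by
    have : L^2 < 1 := by
      calc L^2 = L*L := sq L
        _ ≤ 1*L := mul_le_mul_of_nonneg_right hL1.le hL0
        _ = L := one_mul L
        _ < 1 := hL1
    linarith
  have hc1 : c ≤ 1 := by have := sq_nonneg L; linarith
  by_contra hcon
  push_neg at hcon
  have hD : 0 < D := by
    rcases hD0.lt_or_eq with h | h
    · exact h
    · exfalso; rw [← h] at hcon; linarith
  have hP3 : P < c * D / 3 := by linarith
  have hX0 : 0 ≤ 2*P + L^2*D := by positivity
  have hX : 2*P + L^2*D < D * (1 - c/3) := by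
    have hLc : L^2 = 1 - c := by rw [hc]; ring
    rw [hLc]; linarith
  have hX2 : (2*P + L^2*D)^2 < (D * (1 - c/3))^2 := by
    have h := mul_self_lt_mul_self hX0 hX
    calc (2*P + L^2*D)^2 = (2*P + L^2*D) * (2*P + L^2*D) := sq _
      _ < (D * (1 - c/3)) * (D * (1 - c/3)) := h
      _ = (D * (1 - c/3))^2 := (sq _).symm
  have hP2 : P^2 < (c*D/3)^2 := by
    have h := mul_self_lt_mul_self hP0 hP3
    calc P^2 = P * P := sq _
      _ < (c*D/3) * (c*D/3) := h
      _ = (c*D/3)^2 := (sq _).symm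
  have key : 0 < D^2 * (2*c/3 - 2*c^2/9) := by
    apply mul_pos (pow_pos hD 2)
    have h3c : c < 3 := by linarith
    have hp := mul_pos hc0 (by linarith : (0:ℝ) < 3 - c)
    linarith only [hp]
  have expand : (D * (1 - c/3))^2 + (c*D/3)^2 = D^2 - D^2 * (2*c/3 - 2*c^2/9) := by ring
  linarith only [h2, hX2, hP2, key, expand]

private lemma key_est12 {E F : Type*} [NormedAddCommGroup E] [InnerProductSpace ℝ E]
    [NormedAddCommGroup F] (L : ℝ) (hL0 : 0 ≤ L) (hL1 : L < 1)
    (v₁ v₂ : E) (w₁ w₂ : F) (s₁ s₂ : ℝ)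
    (hv₁ : v₁ ≠ 0) (hv₂ : v₂ ≠ 0) (hs₁ : 0 ≤ s₁) (hs₂ : 0 ≤ s₂)
    (hsq₁ : s₁^2 = ‖v₁‖^2 + ‖w₁‖^2) (hsq₂ : s₂^2 = ‖v₂‖^2 + ‖w₂‖^2)
    (hw₁ : ‖w₁‖ ≤ L * ‖v₁‖) (hw₂ : ‖w₂‖ ≤ L * ‖v₂‖)
    (hww : ‖w₁ - w₂‖ ≤ L * ‖v₁ - v₂‖) :
    (1 - L^2) * ‖v₁ - v₂‖ ≤ 3 * ‖(s₁ / ‖v₁‖) • v₁ - (s₂ / ‖v₂‖) • v₂‖ := by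
  have ht₁ : 0 < ‖v₁‖ := norm_pos_iff.2 hv₁
  have ht₂ : 0 < ‖v₂‖ := norm_pos_iff.2 hv₂
  have hD : ‖v₁ - v₂‖^2 = ‖v₁‖^2 + ‖v₂‖^2 - 2*(inner ℝ v₁ v₂ : ℝ) := by
    rw [norm_sub_sq_real]; ring
  have hP : ‖(s₁ / ‖v₁‖) • v₁ - (s₂ / ‖v₂‖) • v₂‖^2
      = ((s₁/‖v₁‖)*‖v₁‖)^2 + ((s₂/‖v₂‖)*‖v₂‖)^2
        - 2*((s₁/‖v₁‖)*(s₂/‖v₂‖))*(inner ℝ v₁ v₂ : ℝ) := by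
    rw [norm_sub_sq_real, norm_smul, norm_smul, real_inner_smul_left, real_inner_smul_right,
      Real.norm_eq_abs, Real.norm_eq_abs, abs_div, abs_div, abs_of_nonneg hs₁,
      abs_of_nonneg hs₂, abs_of_pos ht₁, abs_of_pos ht₂]
    ring
  exact key_real12 L ‖v₁‖ ‖v₂‖ ‖w₁‖ ‖w₂‖ s₁ s₂ (s₁/‖v₁‖) (s₂/‖v₂‖) (inner ℝ v₁ v₂)
    ‖v₁ - v₂‖ ‖(s₁ / ‖v₁‖) • v₁ - (s₂ / ‖v₂‖) • v₂‖
    hL0 hL1 ht₁ ht₂ (norm_nonneg _) (norm_nonneg _) hw₁ hw₂ hs₁ hs₂ hsq₁ hsq₂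
    (div_mul_cancel₀ s₁ ht₁.ne').symm (div_mul_cancel₀ s₂ ht₂.ne').symm
    (real_inner_le_norm v₁ v₂) (norm_nonneg _) (norm_nonneg _) hD hP
    (le_trans (abs_norm_sub_norm_le _ _) hww)

private lemma eucl_norm_sq12 {m : ℕ} (x : EuclideanSpace ℝ (Fin m)) :
    ‖x‖^2 = ∑ i, (x i)^2 := by
  rw [EuclideanSpace.norm_eq, Real.sq_sqrt (by positivity)]
  simp [Real.norm_eq_abs, sq_abs]

private lemma graphFun_norm_sq12 {d n : ℕ} (hnd : n ≤ d)
    (A : EuclideanSpace ℝ (Fin n) → EuclideanSpace ℝ (Fin (d - n)))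
    (y y' : EuclideanSpace ℝ (Fin n)) :
    ‖graphFun n A y - graphFun n A y'‖^2 = ‖y - y'‖^2 + ‖A y - A y'‖^2 := by
  classical
  set g : ℕ → ℝ := fun i =>
    if h : i < n then (y ⟨i, h⟩ - y' ⟨i, h⟩)^2
    else if h2 : i < d then
      (A y ⟨i - n, by omega⟩ - A y' ⟨i - n, by omega⟩)^2
    else 0 with hg
  set g₂ : ℕ → ℝ := fun j =>
    if h : j < d - n then (A y ⟨j, h⟩ - A y' ⟨j, h⟩)^2 else 0 with hg₂
  have hcoord : ∀ i : Fin d, ((graphFun n A y - graphFun n A y') i)^2 = g (i : ℕ) := by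
    intro i
    have happ : (graphFun n A y - graphFun n A y') i
        = graphFun n A y i - graphFun n A y' i := rfl
    rw [happ]
    by_cases h : (i : ℕ) < n
    · simp only [graphFun, WithLp.equiv_symm_apply, PiLp.toLp_apply, dif_pos h, hg]
    · simp only [graphFun, WithLp.equiv_symm_apply, PiLp.toLp_apply, dif_neg h, hg]
      rw [dif_pos i.isLt]
  calc ‖graphFun n A y - graphFun n A y'‖^2
      = ∑ i : Fin d, ((graphFun n A y - graphFun n A y') i)^2 := eucl_norm_sq12 _
    _ = ∑ i : Fin d, g (i : ℕ) := Finset.sum_congr rfl fun i _ => hcoord i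
    _ = ∑ i ∈ Finset.range d, g i := Fin.sum_univ_eq_sum_range g d
    _ = ∑ i ∈ Finset.Ico 0 n, g i + ∑ i ∈ Finset.Ico n d, g i := by
        rw [Finset.sum_Ico_consecutive g (Nat.zero_le n) hnd, ← Finset.range_eq_Ico]
    _ = ‖y - y'‖^2 + ‖A y - A y'‖^2 := by
        congr 1
        · rw [← Finset.range_eq_Ico, ← Fin.sum_univ_eq_sum_range g n, eucl_norm_sq12]
          refine Finset.sum_congr rfl fun i _ => ?_
          have h : g (i : ℕ) = (y ⟨(i:ℕ), i.isLt⟩ - y' ⟨(i:ℕ), i.isLt⟩)^2 := by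
            rw [hg]; exact dif_pos i.isLt
          rw [h]
          rfl
        · rw [Finset.sum_Ico_eq_sum_range]
          have hsc : ∀ j ∈ Finset.range (d - n), g (n + j) = g₂ j := by
            intro j hj
            have hj' : j < d - n := Finset.mem_range.1 hj
            have h1 : ¬ (n + j < n) := by omega
            have h2 : n + j < d := by omega
            rw [hg, hg₂]
            simp only [dif_neg h1, dif_pos h2, dif_pos hj']
            have e : n + j - n = j := by omega
            congr! 2 <;> exact congrArg _ (Fin.ext e)
          rw [Finset.sum_congr rfl hsc, ← Fin.sum_univ_eq_sum_range g₂ (d - n),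
            eucl_norm_sq12]
          refine Finset.sum_congr rfl fun j _ => ?_
          have h : g₂ (j : ℕ) = (A y ⟨(j:ℕ), j.isLt⟩ - A y' ⟨(j:ℕ), j.isLt⟩)^2 := by
            rw [hg₂]; exact dif_pos j.isLt
          rw [h]
          rfl

private lemma pow_sub_pow_le12 (n : ℕ) (a b : ℝ) (ha : 0 ≤ a) (hab : a ≤ b) :
    b^n - a^n ≤ n * ((b - a) * b^(n-1)) := by
  have hb : 0 ≤ b := le_trans ha hab
  rw [← geom_sum₂_mul b a n]
  have hsum : (∑ i ∈ Finset.range n, b^i * a^(n-1-i)) ≤ (n : ℝ) * b^(n-1) := by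
    calc (∑ i ∈ Finset.range n, b^i * a^(n-1-i)) ≤ ∑ _i ∈ Finset.range n, b^(n-1) := by
          apply Finset.sum_le_sum
          intro i hi
          have hi' : i < n := Finset.mem_range.1 hi
          calc b^i * a^(n-1-i) ≤ b^i * b^(n-1-i) :=
                mul_le_mul_of_nonneg_left (pow_le_pow_left₀ ha hab _) (by positivity)
            _ = b^(n-1) := by rw [← pow_add]; congr 1; omega
      _ = (n : ℝ) * b^(n-1) := by
          rw [Finset.sum_const, Finset.card_range, nsmul_eq_mul]
  calc (∑ i ∈ Finset.range n, b^i * a^(n-1-i)) * (b - a)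
      ≤ ((n : ℝ) * b^(n-1)) * (b - a) := by
        apply mul_le_mul_of_nonneg_right hsum (by linarith)
    _ = n * ((b - a) * b^(n-1)) := by ring


set_option maxHeartbeats 1000000 in
/-- For a Lipschitz graph `Γ = {(y,A(y))}` with `Lip(A) < 1`, the Hausdorff
measure of the intersection of `Γ` with the annulus `A(z,a,b)` is `≲ (b−a)b^{n−1}`. -/
theorem statement12 (n d : ℕ) (hn : 1 ≤ n) (hnd : n < d)
    (L : ℝ≥0) (hL : L < 1)
    (A : EuclideanSpace ℝ (Fin n) → EuclideanSpace ℝ (Fin (d - n)))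
    (hA : LipschitzWith L A) :
    ∃ C : ℝ, 0 < C ∧ ∀ z ∈ Set.range (graphFun n A), ∀ a b : ℝ, 0 < a → a ≤ b →
      μH[(n : ℝ)]
          (Set.range (graphFun n A) ∩ {y : Rd d | a ≤ dist y z ∧ dist y z ≤ b}) ≤
        ENNReal.ofReal (C * (b - a) * b ^ (n - 1)) := by
  classical
  have hn0 : 0 < n := hn
  set Lr : ℝ := (L : ℝ) with hLrdef
  have hL0 : 0 ≤ Lr := L.coe_nonneg
  have hL1 : Lr < 1 := by exact_mod_cast hL
  have hL2 : 0 < 1 - Lr^2 := by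
    have h1 : Lr^2 < 1 := by
      calc Lr^2 = Lr*Lr := sq Lr
        _ ≤ 1*Lr := mul_le_mul_of_nonneg_right hL1.le hL0
        _ = Lr := one_mul Lr
        _ < 1 := hL1
    linarith
  set M : ℝ := 3 / (1 - Lr^2) with hMdef
  have hM0 : 0 < M := by positivity
  set G : EuclideanSpace ℝ (Fin n) → Rd d := graphFun n A with hGdef
  have hnd' : n ≤ d := hnd.le
  have hsplit : ∀ y y', ‖G y - G y'‖^2 = ‖y - y'‖^2 + ‖A y - A y'‖^2 :=
    fun y y' => graphFun_norm_sq12 hnd' A y y'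
  have hAlip : ∀ y y', ‖A y - A y'‖ ≤ Lr * ‖y - y'‖ := by
    intro y y'
    have := hA.dist_le_mul y y'
    rwa [dist_eq_norm, dist_eq_norm] at this
  have hGlip : ∀ y y', ‖G y - G y'‖ ≤ 2 * ‖y - y'‖ := by
    intro y y'
    apply le_of_pow_le_pow_left₀ two_ne_zero (by positivity)
    have h1 := hsplit y y'
    have h3 : ‖A y - A y'‖^2 ≤ (Lr * ‖y-y'‖)^2 :=
      pow_le_pow_left₀ (norm_nonneg _) (hAlip y y') 2
    have h5 : (Lr * ‖y-y'‖)^2 = Lr^2 * ‖y-y'‖^2 := by ring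
    have h6 : Lr^2 * ‖y-y'‖^2 ≤ 1 * ‖y-y'‖^2 :=
      mul_le_mul_of_nonneg_right (by linarith) (by positivity)
    have h7 : (2*‖y-y'‖)^2 = 4 * ‖y-y'‖^2 := by ring
    have h8 : (0:ℝ) ≤ ‖y-y'‖^2 := by positivity
    linarith
  have hGlow : ∀ y y', ‖y - y'‖ ≤ ‖G y - G y'‖ := by
    intro y y'
    apply le_of_pow_le_pow_left₀ two_ne_zero (norm_nonneg _)
    rw [hsplit]
    have : (0:ℝ) ≤ ‖A y - A y'‖^2 := by positivity
    linarith
  have hGlipschitz : LipschitzWith 2 G := by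
    apply LipschitzWith.of_dist_le_mul
    intro x y
    rw [dist_eq_norm, dist_eq_norm, NNReal.coe_ofNat]
    exact hGlip x y
  -- Haar measure instance for the Hausdorff measure on ℝⁿ
  haveI hHaar : (μH[(n:ℝ)] : Measure (EuclideanSpace ℝ (Fin n))).IsAddHaarMeasure := by
    rw [show ((n:ℝ)) = ((Module.finrank ℝ (EuclideanSpace ℝ (Fin n)) : ℕ) : ℝ) by
      rw [finrank_euclideanSpace_fin]]
    infer_instance
  set ν : Measure (EuclideanSpace ℝ (Fin n)) := μH[(n:ℝ)] with hνdef
  set B : ℝ≥0∞ := ν (ball (0 : EuclideanSpace ℝ (Fin n)) 1) with hBdef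
  have hBfin : B ≠ ⊤ := measure_ball_lt_top.ne
  set κ : ℝ≥0∞ := ((2:ℝ≥0) : ℝ≥0∞)^n * ((Real.toNNReal M : ℝ≥0∞))^n * B with hκdef
  have hκfin : κ ≠ ⊤ := by
    apply ENNReal.mul_ne_top (ENNReal.mul_ne_top _ _) hBfin
    · exact ENNReal.pow_ne_top ENNReal.coe_ne_top
    · exact ENNReal.pow_ne_top ENNReal.coe_ne_top
  set c₀ : ℝ := κ.toReal with hc₀def
  have hc₀0 : 0 ≤ c₀ := ENNReal.toReal_nonneg
  have hκeq : κ = ENNReal.ofReal c₀ := (ENNReal.ofReal_toReal hκfin).symm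
  refine ⟨(c₀ + 1) * n, by positivity, ?_⟩
  intro z hz a b ha hab
  obtain ⟨y₀, rfl⟩ := hz
  have hb : 0 < b := lt_of_lt_of_le ha hab
  set S : Set (Rd d) := {y : Rd d | a ≤ dist y (G y₀) ∧ dist y (G y₀) ≤ b} with hSdef
  set E : Set (EuclideanSpace ℝ (Fin n)) := G ⁻¹' S with hEdef
  -- the comparison map Φ
  set Φ : EuclideanSpace ℝ (Fin n) → EuclideanSpace ℝ (Fin n) :=
    fun y => y₀ + (‖G y - G y₀‖ / ‖y - y₀‖) • (y - y₀) with hΦdef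
  have hmemE : ∀ y ∈ E, a ≤ ‖G y - G y₀‖ ∧ ‖G y - G y₀‖ ≤ b := by
    intro y hy
    have := hy
    rw [hEdef, Set.mem_preimage, hSdef, Set.mem_setOf_eq, dist_eq_norm] at this
    exact this
  have hvne : ∀ y ∈ E, y - y₀ ≠ 0 := by
    intro y hy h0
    obtain ⟨ha', _⟩ := hmemE y hy
    rw [sub_eq_zero] at h0
    rw [h0, sub_self, norm_zero] at ha'
    linarith
  have hkey : ∀ y₁ ∈ E, ∀ y₂ ∈ E, ‖y₁ - y₂‖ ≤ M * ‖Φ y₁ - Φ y₂‖ := by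
    intro y₁ hy₁ y₂ hy₂
    have hv₁ := hvne y₁ hy₁
    have hv₂ := hvne y₂ hy₂
    have hww : ‖(A y₁ - A y₀) - (A y₂ - A y₀)‖ ≤ Lr * ‖(y₁ - y₀) - (y₂ - y₀)‖ := by
      rw [sub_sub_sub_cancel_right, sub_sub_sub_cancel_right]
      exact hAlip y₁ y₂
    have hest := key_est12 Lr hL0 hL1 (y₁ - y₀) (y₂ - y₀) (A y₁ - A y₀) (A y₂ - A y₀)
      (‖G y₁ - G y₀‖) (‖G y₂ - G y₀‖) hv₁ hv₂ (norm_nonneg _) (norm_nonneg _)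
      (hsplit y₁ y₀) (hsplit y₂ y₀) (hAlip y₁ y₀) (hAlip y₂ y₀) hww
    have hΦdiff : Φ y₁ - Φ y₂
        = (‖G y₁ - G y₀‖ / ‖y₁ - y₀‖) • (y₁ - y₀)
          - (‖G y₂ - G y₀‖ / ‖y₂ - y₀‖) • (y₂ - y₀) := by
      rw [hΦdef]; exact add_sub_add_left_eq_sub _ _ y₀
    have hyy : y₁ - y₂ = (y₁ - y₀) - (y₂ - y₀) := by abel
    rw [hΦdiff, hyy]
    rw [hMdef, div_mul_eq_mul_div, le_div_iff₀ hL2, mul_comm _ (1 - Lr^2)]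
    linarith [hest]
  have hinj : Set.InjOn Φ E := by
    intro y₁ h₁ y₂ h₂ heq
    have h := hkey y₁ h₁ y₂ h₂
    rw [heq, sub_self, norm_zero, mul_zero] at h
    have h0 : ‖y₁ - y₂‖ = 0 := le_antisymm h (norm_nonneg _)
    rwa [norm_eq_zero, sub_eq_zero] at h0
  set Ψ : EuclideanSpace ℝ (Fin n) → EuclideanSpace ℝ (Fin n) :=
    Function.invFunOn Φ E with hΨdef
  have hΨΦ : ∀ y ∈ E, Ψ (Φ y) = y := fun y hy => hinj.leftInvOn_invFunOn hy
  have hEsub : E ⊆ Ψ '' (Φ '' E) := fun y hy =>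
    ⟨Φ y, Set.mem_image_of_mem Φ hy, hΨΦ y hy⟩
  have hΨlip : LipschitzOnWith (Real.toNNReal M) Ψ (Φ '' E) := by
    apply LipschitzOnWith.of_dist_le_mul
    rintro x₁ ⟨y₁, hy₁, rfl⟩ x₂ ⟨y₂, hy₂, rfl⟩
    rw [hΨΦ y₁ hy₁, hΨΦ y₂ hy₂, dist_eq_norm, dist_eq_norm,
      Real.coe_toNNReal M hM0.le]
    exact hkey y₁ hy₁ y₂ hy₂
  have hΦnorm : ∀ y ∈ E, dist (Φ y) y₀ = ‖G y - G y₀‖ := by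
    intro y hy
    have hv := hvne y hy
    have ht : 0 < ‖y - y₀‖ := norm_pos_iff.2 hv
    rw [hΦdef, dist_eq_norm]
    simp only [add_sub_cancel_left]
    rw [norm_smul, Real.norm_eq_abs, abs_div, abs_of_nonneg (norm_nonneg _),
      abs_of_pos ht, div_mul_cancel₀ _ ht.ne']
  have hΦE : Φ '' E ⊆ closedBall y₀ b \ ball y₀ a := by
    rintro x ⟨y, hy, rfl⟩
    obtain ⟨ha', hb'⟩ := hmemE y hy
    constructor
    · rw [mem_closedBall, hΦnorm y hy]; exact hb'
    · rw [mem_ball, hΦnorm y hy, not_lt]; exact ha'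
  -- annulus measure bound
  have hAnn : ν (closedBall y₀ b \ ball y₀ a) ≤ ENNReal.ofReal (b^n - a^n) * B := by
    have hsub : ball y₀ a ⊆ closedBall y₀ b :=
      ball_subset_closedBall.trans (closedBall_subset_closedBall hab)
    rw [measure_diff hsub measurableSet_ball.nullMeasurableSet measure_ball_lt_top.ne]
    have hcb : ν (closedBall y₀ b) = ENNReal.ofReal (b^n) * B := by
      rw [Measure.addHaar_closedBall ν y₀ hb.le, finrank_euclideanSpace_fin, hBdef]
    have hba : ν (ball y₀ a) = ENNReal.ofReal (a^n) * B := by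
      rw [Measure.addHaar_ball_of_pos ν y₀ ha, finrank_euclideanSpace_fin, hBdef]
    have hapow : a^n ≤ b^n := pow_le_pow_left₀ ha.le hab n
    rw [hcb, hba, tsub_le_iff_right, ← add_mul,
      ← ENNReal.ofReal_add (sub_nonneg.2 hapow) (by positivity)]
    apply mul_le_mul_left
    apply ENNReal.ofReal_le_ofReal
    linarith
  -- main chain
  rw [← Set.image_preimage_eq_range_inter]
  have hd0 : (0:ℝ) ≤ (n:ℝ) := by positivity
  calc μH[(n:ℝ)] (G '' (G ⁻¹' S))
      ≤ ((2:ℝ≥0) : ℝ≥0∞)^(n:ℝ) * μH[(n:ℝ)] (G ⁻¹' S) :=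
        hGlipschitz.hausdorffMeasure_image_le hd0 _
    _ = ((2:ℝ≥0) : ℝ≥0∞)^n * ν E := by
        rw [ENNReal.rpow_natCast]
    _ ≤ ((2:ℝ≥0) : ℝ≥0∞)^n * (((Real.toNNReal M : ℝ≥0∞))^n * (ENNReal.ofReal (b^n - a^n) * B)) := by
        apply mul_le_mul_right
        calc ν E ≤ ν (Ψ '' (Φ '' E)) := measure_mono hEsub
          _ ≤ ((Real.toNNReal M : ℝ≥0∞))^(n:ℝ) * ν (Φ '' E) :=
              hΨlip.hausdorffMeasure_image_le hd0
          _ = ((Real.toNNReal M : ℝ≥0∞))^n * ν (Φ '' E) := by rw [ENNReal.rpow_natCast]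
          _ ≤ ((Real.toNNReal M : ℝ≥0∞))^n * (ENNReal.ofReal (b^n - a^n) * B) := by
              apply mul_le_mul_right
              exact le_trans (measure_mono hΦE) hAnn
    _ = κ * ENNReal.ofReal (b^n - a^n) := by rw [hκdef]; ring
    _ ≤ ENNReal.ofReal ((c₀ + 1) * n * (b - a) * b^(n-1)) := by
        rw [hκeq, ← ENNReal.ofReal_mul hc₀0]
        apply ENNReal.ofReal_le_ofReal
        have h1 : b^n - a^n ≤ (n:ℝ) * ((b - a) * b^(n-1)) :=
          pow_sub_pow_le12 n a b ha.le hab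
        have h2 : (0:ℝ) ≤ (n:ℝ) * ((b - a) * b^(n-1)) := by
          have : (0:ℝ) ≤ b - a := by linarith
          positivity
        calc c₀ * (b^n - a^n) ≤ c₀ * ((n:ℝ) * ((b - a) * b^(n-1))) :=
              mul_le_mul_of_nonneg_left h1 hc₀0
          _ ≤ (c₀ + 1) * ((n:ℝ) * ((b - a) * b^(n-1))) :=
              mul_le_mul_of_nonneg_right (by linarith) h2
          _ = (c₀ + 1) * n * (b - a) * b^(n-1) := by ring


end
end

section
/- Let 1 ≤ n < d be integers, ρ ≥ 1, K an admissible odd kernel, and φ_ℝ an admissible truncation profile. There exists C > 0, depending only on n, d, K, φ_ℝ and ρ, such that for every finite signed Borel measure ν on ℝ^d with supp ν ⊂ B(z₀, r) for some z₀ ∈ ℝ^d and r > 0 and with ν(ℝ^d) = 0, and for every x ∈ ℝ^d with |x − z₀| ≥ 4r: V_ρ(T_φ ν)(x) ≤ C r ‖ν‖ |x − z₀|^{−n−1}, where ‖ν‖ is the total variation norm of ν. -/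
open MeasureTheory Metric Set
open scoped ENNReal NNReal

noncomputable section

/-! ### Auxiliary lemmas -/

lemma tele_aux (c : ℤ → ℝ) (hc : Antitone c) {α β : ℝ} (h : ∀ m, c m ∈ Icc α β) :
    ∀ s : Finset ℤ, ∀ M : ℤ, (∀ b ∈ s, b < M) → ∑ m ∈ s, (c m - c (m + 1)) ≤ β - c M := by
  intro s
  induction s using Finset.induction_on_max with
  | empty => intro M _; simp; linarith [(h M).2]
  | insert a s ha ih =>
    intro M hM
    have haM : a < M := hM a (Finset.mem_insert_self a s)
    have hans : a ∉ s := fun hmem => lt_irrefl a (ha a hmem)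
    rw [Finset.sum_insert hans]
    have h1 : ∑ m ∈ s, (c m - c (m + 1)) ≤ β - c a := ih a ha
    have h2 : c M ≤ c (a + 1) := hc (by omega)
    linarith

lemma tele (c : ℤ → ℝ) (hc : Antitone c) {α β : ℝ} (h : ∀ m, c m ∈ Icc α β) (s : Finset ℤ) :
    ∑ m ∈ s, (c m - c (m + 1)) ≤ β - α := by
  rcases s.eq_empty_or_nonempty with rfl | hs
  · simp; linarith [(h 0).1, (h 0).2]
  · calc ∑ m ∈ s, (c m - c (m + 1)) ≤ β - c (s.max' hs + 1) :=
        tele_aux c hc h s (s.max' hs + 1) (fun b hb => by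
          have := Finset.le_max' s b hb; omega)
      _ ≤ β - α := by linarith [(h (s.max' hs + 1)).1]

lemma varsum_le {F : ℝ → ℝ} {α β L : ℝ} (hα : 0 < α) (hαβ : α ≤ β) (hL : 0 ≤ L)
    (hlip : ∀ u ∈ Icc α β, ∀ v ∈ Icc α β, |F v - F u| ≤ L * |v - u|)
    (hlow : ∀ u : ℝ, 0 < u → u ≤ α → F u = F α) (hhigh : ∀ u : ℝ, β ≤ u → F u = F β)
    (ε : ℤ → ℝ) (hmono : Antitone ε) (hpos : ∀ m, 0 < ε m) (s : Finset ℤ) :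
    ∑ m ∈ s, |F (ε (m + 1)) - F (ε m)| ≤ L * (β - α) := by
  set c : ℤ → ℝ := fun m => max (min (ε m) β) α with hc
  have hcanti : Antitone c := fun i j hij =>
    max_le_max (min_le_min (hmono hij) le_rfl) le_rfl
  have hcmem : ∀ m, c m ∈ Icc α β := fun m =>
    ⟨le_max_right _ _, max_le (min_le_right _ _) hαβ⟩
  have hFc : ∀ m, F (ε m) = F (c m) := by
    intro m
    rcases le_or_gt (ε m) α with h1 | h1
    · have : c m = α := by
        simp only [hc]
        rw [min_eq_left (h1.trans hαβ), max_eq_right h1]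
      rw [this, hlow (ε m) (hpos m) h1]
    · rcases le_or_gt β (ε m) with h2 | h2
      · have : c m = β := by
          simp only [hc]
          rw [min_eq_right h2, max_eq_left hαβ]
        rw [this, hhigh (ε m) h2]
      · have : c m = ε m := by
          simp only [hc]
          rw [min_eq_left h2.le, max_eq_left h1.le]
        rw [this]
  calc ∑ m ∈ s, |F (ε (m + 1)) - F (ε m)|
      ≤ ∑ m ∈ s, L * (c m - c (m + 1)) := by
        refine Finset.sum_le_sum fun m _ => ?_
        rw [hFc m, hFc (m + 1)]
        have h1 := hlip (c m) (hcmem m) (c (m + 1)) (hcmem (m + 1))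
        have h2 : c (m + 1) ≤ c m := hcanti (by omega)
        calc |F (c (m + 1)) - F (c m)| ≤ L * |c (m + 1) - c m| := h1
          _ = L * (c m - c (m + 1)) := by rw [abs_sub_comm, abs_of_nonneg (by linarith)]
    _ = L * ∑ m ∈ s, (c m - c (m + 1)) := by rw [Finset.mul_sum]
    _ ≤ L * (β - α) := mul_le_mul_of_nonneg_left (tele c hcanti hcmem s) hL


lemma hasDerivAt_wdiv (w t : ℝ) (ht : t ≠ 0) :
    HasDerivAt (fun t : ℝ => w / t ^ 2) (w * (-(2 * t) / (t ^ 2) ^ 2)) t := by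
  have h1 : HasDerivAt (fun t : ℝ => t ^ 2) (2 * t) t := by
    simpa [mul_comm] using hasDerivAt_pow 2 t
  have h2 : HasDerivAt (fun t : ℝ => (t ^ 2)⁻¹) (-(2 * t) / (t ^ 2) ^ 2) t :=
    h1.inv (pow_ne_zero 2 ht)
  have h3 : (fun t : ℝ => w / t ^ 2) = fun t : ℝ => w * (t ^ 2)⁻¹ := by
    funext u; rw [div_eq_mul_inv]
  rw [h3]
  exact h2.const_mul w

lemma hasDerivAt_invsq (t : ℝ) (ht : t ≠ 0) :
    HasDerivAt (fun t : ℝ => (t ^ 2)⁻¹) (-(2 * t) / (t ^ 2) ^ 2) t := by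
  have h1 : HasDerivAt (fun t : ℝ => t ^ 2) (2 * t) t := by
    simpa [mul_comm] using hasDerivAt_pow 2 t
  exact h1.inv (pow_ne_zero 2 ht)

set_option maxHeartbeats 2000000 in
lemma keyLip {d : ℕ} (n : ℕ) (K : Rd d → ℝ) (φ dφ ddφ : ℝ → ℝ) (CK M1 M2 : ℝ)
    (hCK : 0 < CK) (hM1 : 0 ≤ M1) (hM2 : 0 ≤ M2)
    (hKdiff : ∀ z : Rd d, z ≠ 0 → DifferentiableAt ℝ K z)
    (hKb : ∀ z : Rd d, z ≠ 0 → |K z| ≤ CK / ‖z‖ ^ n)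
    (hKb' : ∀ z : Rd d, z ≠ 0 → ‖fderiv ℝ K z‖ ≤ CK / ‖z‖ ^ (n + 1))
    (hd1 : ∀ t : ℝ, 0 < t → HasDerivAt φ (dφ t) t)
    (hd2 : ∀ t : ℝ, 0 < t → HasDerivAt dφ (ddφ t) t)
    (hM1b : ∀ t ∈ Icc (1 / 100 : ℝ) 25, |dφ t| ≤ M1)
    (hM2b : ∀ t ∈ Icc (1 / 100 : ℝ) 25, |ddφ t| ≤ M2)
    (x z₀ y : Rd d) (r : ℝ) (hr : 0 < r) (hDr : 4 * r ≤ ‖x - z₀‖)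
    (hy : dist y z₀ < r) :
    ∀ ε₁ ∈ Icc (‖x - z₀‖ / 4) (4 * ‖x - z₀‖), ∀ ε₂ ∈ Icc (‖x - z₀‖ / 4) (4 * ‖x - z₀‖),
      |(φ (‖x - y‖ ^ 2 / ε₂ ^ 2) * K (x - y) - φ (‖x - z₀‖ ^ 2 / ε₂ ^ 2) * K (x - z₀)) -
        (φ (‖x - y‖ ^ 2 / ε₁ ^ 2) * K (x - y) - φ (‖x - z₀‖ ^ 2 / ε₁ ^ 2) * K (x - z₀))| ≤
      ((200 * M1 * CK / ((3 / 4 : ℝ) ^ (n + 1)) + 3 * CK * (3200 * M2 + 128 * M1)) * r /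
        ‖x - z₀‖ ^ (n + 2)) * |ε₂ - ε₁| := by
  set D : ℝ := ‖x - z₀‖ with hD
  set a : ℝ := ‖x - y‖ with ha
  have hD0 : 0 < D := by linarith
  have hab : |a - D| ≤ r := by
    have h1 : |a - D| ≤ ‖(x - y) - (x - z₀)‖ := abs_norm_sub_norm_le _ _
    have h2 : (x - y) - (x - z₀) = z₀ - y := by abel
    rw [h2, ← dist_eq_norm, dist_comm] at h1
    linarith
  have hab' := abs_le.1 hab
  have ha1 : 3 * D / 4 ≤ a := by linarith
  have ha2 : a ≤ 5 * D / 4 := by linarith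
  have ha0 : 0 < a := by linarith
  intro ε₁ hε₁ ε₂ hε₂
  set I : Set ℝ := Icc (D / 4) (4 * D) with hI
  set J : Set ℝ := Icc (9 / 16 * D ^ 2) (25 / 16 * D ^ 2) with hJ
  have hJa : a ^ 2 ∈ J := by constructor <;> nlinarith
  have hJD : D ^ 2 ∈ J := by constructor <;> nlinarith
  have hIpos : ∀ t ∈ I, 0 < t := fun t htI => lt_of_lt_of_le (by linarith) htI.1
  have harg : ∀ w ∈ J, ∀ t ∈ I, w / t ^ 2 ∈ Icc (1 / 100 : ℝ) 25 := by
    intro w hw t htI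
    have ht0 : 0 < t := hIpos t htI
    have ht2 : 0 < t ^ 2 := by positivity
    constructor
    · rw [le_div_iff₀ ht2]; nlinarith [htI.2, hw.1]
    · rw [div_le_iff₀ ht2]; nlinarith [htI.1, hw.2]
  have habs_q : ∀ w ∈ J, ∀ t ∈ I, |w * (-(2 * t) / (t ^ 2) ^ 2)| ≤ 200 / D := by
    intro w hw t htI
    have ht0 : 0 < t := hIpos t htI
    have hw0 : 0 ≤ w := le_trans (by positivity) hw.1
    have heq : w * (-(2 * t) / (t ^ 2) ^ 2) = -(2 * w / t ^ 3) := by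
      field_simp
    rw [heq, abs_neg, abs_of_nonneg (by positivity)]
    rw [div_le_div_iff₀ (by positivity) hD0]
    have ht3 : (D / 4) ^ 3 ≤ t ^ 3 := pow_le_pow_left₀ (by positivity) htI.1 3
    nlinarith [hw.2, mul_le_mul_of_nonneg_right hw.2 hD0.le]
  have hφlip : ∀ s₁ ∈ Icc (1 / 100 : ℝ) 25, ∀ s₂ ∈ Icc (1 / 100 : ℝ) 25,
      |φ s₂ - φ s₁| ≤ M1 * |s₂ - s₁| := by
    intro s₁ hs₁ s₂ hs₂
    have := Convex.norm_image_sub_le_of_norm_hasDerivWithin_le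
      (f := φ) (f' := dφ) (s := Icc (1 / 100 : ℝ) 25) (C := M1)
      (fun t htmem => (hd1 t (by linarith [htmem.1])).hasDerivWithinAt)
      (fun t htmem => by rw [Real.norm_eq_abs]; exact hM1b t htmem)
      (convex_Icc _ _) hs₁ hs₂
    simpa [Real.norm_eq_abs] using this
  have hqlip : ∀ w ∈ J, |w / ε₂ ^ 2 - w / ε₁ ^ 2| ≤ 200 / D * |ε₂ - ε₁| := by
    intro w hw
    have := Convex.norm_image_sub_le_of_norm_hasDerivWithin_le
      (f := fun t : ℝ => w / t ^ 2) (f' := fun t => w * (-(2 * t) / (t ^ 2) ^ 2))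
      (s := I) (C := 200 / D)
      (fun t htI => (hasDerivAt_wdiv w t (hIpos t htI).ne').hasDerivWithinAt)
      (fun t htI => by rw [Real.norm_eq_abs]; exact habs_q w hw t htI)
      (convex_Icc _ _) hε₁ hε₂
    simpa [Real.norm_eq_abs] using this
  have hxi : ∀ w ∈ J, |dφ (w / ε₂ ^ 2) * (ε₂ ^ 2)⁻¹ - dφ (w / ε₁ ^ 2) * (ε₁ ^ 2)⁻¹| ≤
      (3200 * M2 + 128 * M1) / D ^ 3 * |ε₂ - ε₁| := by
    intro w hw
    have hw0 : 0 < w := lt_of_lt_of_le (by positivity) hw.1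
    have := Convex.norm_image_sub_le_of_norm_hasDerivWithin_le
      (f := fun t : ℝ => dφ (w / t ^ 2) * (t ^ 2)⁻¹)
      (f' := fun t => ddφ (w / t ^ 2) * (w * (-(2 * t) / (t ^ 2) ^ 2)) * (t ^ 2)⁻¹ +
        dφ (w / t ^ 2) * (-(2 * t) / (t ^ 2) ^ 2))
      (s := I) (C := (3200 * M2 + 128 * M1) / D ^ 3)
      (fun t htI => by
        have ht0 : 0 < t := hIpos t htI
        have hq := hasDerivAt_wdiv w t ht0.ne'
        have hA : HasDerivAt (fun t : ℝ => dφ (w / t ^ 2))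
            (ddφ (w / t ^ 2) * (w * (-(2 * t) / (t ^ 2) ^ 2))) t := by
          have := (hd2 (w / t ^ 2) (by positivity)).comp t hq
          simpa [Function.comp_def] using this
        exact (hA.mul (hasDerivAt_invsq t ht0.ne')).hasDerivWithinAt)
      (fun t htI => by
        have ht0 : 0 < t := hIpos t htI
        have harg' := harg w hw t htI
        have hM2' := hM2b _ harg'
        have hM1' := hM1b _ harg'
        have hqd := habs_q w hw t htI
        have hinv : |(t ^ 2)⁻¹| ≤ 16 / D ^ 2 := by
          rw [abs_of_nonneg (by positivity)]
          have h1 : D ^ 2 / 16 ≤ t ^ 2 := by nlinarith [htI.1]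
          calc (t ^ 2)⁻¹ ≤ (D ^ 2 / 16)⁻¹ := by
                apply inv_anti₀ (by positivity) h1
            _ = 16 / D ^ 2 := by rw [inv_div]
        have h2t : |(-(2 * t) / (t ^ 2) ^ 2)| ≤ 128 / D ^ 3 := by
          have heq : -(2 * t) / (t ^ 2) ^ 2 = -(2 / t ^ 3) := by
            field_simp
          rw [heq, abs_neg, abs_of_nonneg (by positivity)]
          rw [div_le_div_iff₀ (by positivity) (by positivity)]
          have ht3 : (D / 4) ^ 3 ≤ t ^ 3 := pow_le_pow_left₀ (by positivity) htI.1 3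
          nlinarith
        rw [Real.norm_eq_abs]
        have hd200 : (0:ℝ) ≤ 200 / D := div_nonneg (by norm_num) hD0.le
        have b1 : |ddφ (w / t ^ 2) * (w * (-(2 * t) / (t ^ 2) ^ 2)) * (t ^ 2)⁻¹| ≤
            M2 * (200 / D) * (16 / D ^ 2) := by
          rw [abs_mul, abs_mul]
          exact mul_le_mul (mul_le_mul hM2' hqd (abs_nonneg _) hM2) hinv (abs_nonneg _)
            (mul_nonneg hM2 hd200)
        have b2 : |dφ (w / t ^ 2) * (-(2 * t) / (t ^ 2) ^ 2)| ≤ M1 * (128 / D ^ 3) := by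
          rw [abs_mul]
          exact mul_le_mul hM1' h2t (abs_nonneg _) hM1
        have b3 : M2 * (200 / D) * (16 / D ^ 2) + M1 * (128 / D ^ 3) =
            (3200 * M2 + 128 * M1) / D ^ 3 := by
          field_simp
          ring
        calc |ddφ (w / t ^ 2) * (w * (-(2 * t) / (t ^ 2) ^ 2)) * (t ^ 2)⁻¹ +
              dφ (w / t ^ 2) * (-(2 * t) / (t ^ 2) ^ 2)|
            ≤ |ddφ (w / t ^ 2) * (w * (-(2 * t) / (t ^ 2) ^ 2)) * (t ^ 2)⁻¹| +
              |dφ (w / t ^ 2) * (-(2 * t) / (t ^ 2) ^ 2)| := abs_add_le _ _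
          _ ≤ (3200 * M2 + 128 * M1) / D ^ 3 := by rw [← b3]; exact add_le_add b1 b2)
      (convex_Icc _ _) hε₁ hε₂
    simpa [Real.norm_eq_abs] using this
  have hε₁0 : 0 < ε₁ := hIpos ε₁ hε₁
  have hε₂0 : 0 < ε₂ := hIpos ε₂ hε₂
  have hW : |(φ (a ^ 2 / ε₂ ^ 2) - φ (a ^ 2 / ε₁ ^ 2)) -
      (φ (D ^ 2 / ε₂ ^ 2) - φ (D ^ 2 / ε₁ ^ 2))| ≤
      (3200 * M2 + 128 * M1) / D ^ 3 * |ε₂ - ε₁| * |a ^ 2 - D ^ 2| := by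
    have := Convex.norm_image_sub_le_of_norm_hasDerivWithin_le
      (f := fun w : ℝ => φ (w / ε₂ ^ 2) - φ (w / ε₁ ^ 2))
      (f' := fun w => dφ (w / ε₂ ^ 2) * (1 / ε₂ ^ 2) - dφ (w / ε₁ ^ 2) * (1 / ε₁ ^ 2))
      (s := J) (C := (3200 * M2 + 128 * M1) / D ^ 3 * |ε₂ - ε₁|)
      (fun w hw => by
        have hw0 : 0 < w := lt_of_lt_of_le (by positivity) hw.1
        have g2 : HasDerivAt (fun w : ℝ => φ (w / ε₂ ^ 2)) (dφ (w / ε₂ ^ 2) * (1 / ε₂ ^ 2)) w := by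
          have hdq := (hasDerivAt_id w).div_const (ε₂ ^ 2)
          have := (hd1 (w / ε₂ ^ 2) (by positivity)).comp w hdq
          simpa [Function.comp_def] using this
        have g1 : HasDerivAt (fun w : ℝ => φ (w / ε₁ ^ 2)) (dφ (w / ε₁ ^ 2) * (1 / ε₁ ^ 2)) w := by
          have hdq := (hasDerivAt_id w).div_const (ε₁ ^ 2)
          have := (hd1 (w / ε₁ ^ 2) (by positivity)).comp w hdq
          simpa [Function.comp_def] using this
        exact (g2.sub g1).hasDerivWithinAt)
      (fun w hw => by
        rw [Real.norm_eq_abs]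
        have := hxi w hw
        simpa [one_div] using this)
      (convex_Icc _ _) hJD hJa
    simpa [Real.norm_eq_abs] using this
  have hΔφa : |φ (a ^ 2 / ε₂ ^ 2) - φ (a ^ 2 / ε₁ ^ 2)| ≤ M1 * (200 / D * |ε₂ - ε₁|) := by
    have h1 := hφlip (a ^ 2 / ε₁ ^ 2) (harg _ hJa ε₁ hε₁) (a ^ 2 / ε₂ ^ 2) (harg _ hJa ε₂ hε₂)
    have h2 := hqlip (a ^ 2) hJa
    calc |φ (a ^ 2 / ε₂ ^ 2) - φ (a ^ 2 / ε₁ ^ 2)| ≤ M1 * |a ^ 2 / ε₂ ^ 2 - a ^ 2 / ε₁ ^ 2| := h1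
      _ ≤ M1 * (200 / D * |ε₂ - ε₁|) := mul_le_mul_of_nonneg_left h2 hM1
  have hxz₀ : (x - z₀ : Rd d) ≠ 0 := by
    intro h0
    rw [hD, h0, norm_zero] at hD0
    exact lt_irrefl 0 hD0
  have hBbound : |K (x - z₀)| ≤ CK / D ^ n := hKb _ hxz₀
  have hABdiff : |K (x - y) - K (x - z₀)| ≤ CK / ((3 / 4 : ℝ) ^ (n + 1) * D ^ (n + 1)) * r := by
    set S : Set (Rd d) := closedBall (x - z₀) (D / 4) with hS
    have hz : ∀ z ∈ S, 3 * D / 4 ≤ ‖z‖ := by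
      intro z hzS
      have h1 : ‖(x - z₀) - z‖ ≤ D / 4 := by
        rw [← dist_eq_norm, dist_comm]
        exact mem_closedBall.mp hzS
      have h2 : D ≤ ‖z‖ + ‖(x - z₀) - z‖ := by
        calc D = ‖z + ((x - z₀) - z)‖ := by rw [show z + ((x - z₀) - z) = x - z₀ by abel]
          _ ≤ ‖z‖ + ‖(x - z₀) - z‖ := norm_add_le _ _
      linarith
    have hzne : ∀ z ∈ S, z ≠ 0 := fun z hzS =>
      norm_pos_iff.mp (lt_of_lt_of_le (by linarith) (hz z hzS))
    have hfb : ∀ z ∈ S, ‖fderiv ℝ K z‖ ≤ CK / (3 / 4 * D) ^ (n + 1) := by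
      intro z hzS
      refine le_trans (hKb' z (hzne z hzS)) ?_
      have h34 : (0:ℝ) < 3 / 4 * D := by linarith
      have hzn := hz z hzS
      have hzp : (0:ℝ) < ‖z‖ := by linarith
      rw [div_le_div_iff₀ (pow_pos hzp _) (pow_pos h34 _)]
      exact mul_le_mul_of_nonneg_left (pow_le_pow_left₀ h34.le (by linarith) _) hCK.le
    have hmem1 : (x - y : Rd d) ∈ S := by
      rw [hS, mem_closedBall, dist_eq_norm]
      have h2 : (x - y) - (x - z₀) = z₀ - y := by abel
      rw [h2, ← dist_eq_norm, dist_comm]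
      linarith
    have hmem2 : (x - z₀ : Rd d) ∈ S := mem_closedBall_self (by linarith)
    have hmvt := Convex.norm_image_sub_le_of_norm_fderiv_le
      (fun z hzS => hKdiff z (hzne z hzS)) hfb (convex_closedBall _ _) hmem2 hmem1
    have hyz : ‖(x - y) - (x - z₀)‖ ≤ r := by
      have h2 : (x - y) - (x - z₀) = z₀ - y := by abel
      rw [h2, ← dist_eq_norm, dist_comm]
      linarith
    have hCpos : (0:ℝ) ≤ CK / (3 / 4 * D) ^ (n + 1) := by positivity
    calc |K (x - y) - K (x - z₀)| ≤ CK / (3 / 4 * D) ^ (n + 1) * ‖(x - y) - (x - z₀)‖ := by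
          simpa [Real.norm_eq_abs] using hmvt
      _ ≤ CK / (3 / 4 * D) ^ (n + 1) * r := mul_le_mul_of_nonneg_left hyz hCpos
      _ = CK / ((3 / 4 : ℝ) ^ (n + 1) * D ^ (n + 1)) * r := by rw [mul_pow]
  have haD : |a ^ 2 - D ^ 2| ≤ 3 * r * D := by
    have heq : a ^ 2 - D ^ 2 = (a - D) * (a + D) := by ring
    rw [heq, abs_mul, abs_of_nonneg (show (0:ℝ) ≤ a + D by linarith)]
    nlinarith [abs_nonneg (a - D)]
  have hsplit : (φ (a ^ 2 / ε₂ ^ 2) * K (x - y) - φ (D ^ 2 / ε₂ ^ 2) * K (x - z₀)) -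
      (φ (a ^ 2 / ε₁ ^ 2) * K (x - y) - φ (D ^ 2 / ε₁ ^ 2) * K (x - z₀)) =
      (φ (a ^ 2 / ε₂ ^ 2) - φ (a ^ 2 / ε₁ ^ 2)) * (K (x - y) - K (x - z₀)) +
      ((φ (a ^ 2 / ε₂ ^ 2) - φ (a ^ 2 / ε₁ ^ 2)) - (φ (D ^ 2 / ε₂ ^ 2) - φ (D ^ 2 / ε₁ ^ 2))) *
        K (x - z₀) := by ring
  rw [hsplit]
  have hDn : (0:ℝ) < D ^ n := pow_pos hD0 n
  have hDn1 : (0:ℝ) < D ^ (n + 1) := pow_pos hD0 (n + 1)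
  have hc34 : (0:ℝ) < (3 / 4 : ℝ) ^ (n + 1) := by positivity
  calc |(φ (a ^ 2 / ε₂ ^ 2) - φ (a ^ 2 / ε₁ ^ 2)) * (K (x - y) - K (x - z₀)) +
        ((φ (a ^ 2 / ε₂ ^ 2) - φ (a ^ 2 / ε₁ ^ 2)) - (φ (D ^ 2 / ε₂ ^ 2) - φ (D ^ 2 / ε₁ ^ 2))) *
          K (x - z₀)|
      ≤ |(φ (a ^ 2 / ε₂ ^ 2) - φ (a ^ 2 / ε₁ ^ 2))| * |K (x - y) - K (x - z₀)| +
        |(φ (a ^ 2 / ε₂ ^ 2) - φ (a ^ 2 / ε₁ ^ 2)) - (φ (D ^ 2 / ε₂ ^ 2) - φ (D ^ 2 / ε₁ ^ 2))| *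
          |K (x - z₀)| := by
        refine le_trans (abs_add_le _ _) ?_
        rw [abs_mul, abs_mul]
    _ ≤ (M1 * (200 / D * |ε₂ - ε₁|)) * (CK / ((3 / 4 : ℝ) ^ (n + 1) * D ^ (n + 1)) * r) +
        ((3200 * M2 + 128 * M1) / D ^ 3 * |ε₂ - ε₁| * (3 * r * D)) * (CK / D ^ n) := by
        refine add_le_add (mul_le_mul hΔφa hABdiff (abs_nonneg _) (by positivity)) ?_
        refine mul_le_mul ?_ hBbound (abs_nonneg _) (by positivity)
        exact le_trans hW (mul_le_mul_of_nonneg_left haD (by positivity))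
    _ = ((200 * M1 * CK / ((3 / 4 : ℝ) ^ (n + 1)) + 3 * CK * (3200 * M2 + 128 * M1)) * r /
        D ^ (n + 2)) * |ε₂ - ε₁| := by
        have e1 : D ^ (n + 1) = D ^ n * D := pow_succ D n
        have e2 : D ^ (n + 2) = D ^ n * D * D := by rw [pow_succ, pow_succ]
        rw [e1, e2]
        field_simp


set_option maxHeartbeats 1000000 in
lemma pointBound {d : ℕ} (n : ℕ) (K : Rd d → ℝ) (φ dφ ddφ : ℝ → ℝ) (CK M1 M2 : ℝ)
    (hCK : 0 < CK) (hM1 : 0 ≤ M1) (hM2 : 0 ≤ M2)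
    (hKdiff : ∀ z : Rd d, z ≠ 0 → DifferentiableAt ℝ K z)
    (hKb : ∀ z : Rd d, z ≠ 0 → |K z| ≤ CK / ‖z‖ ^ n)
    (hKb' : ∀ z : Rd d, z ≠ 0 → ‖fderiv ℝ K z‖ ≤ CK / ‖z‖ ^ (n + 1))
    (hd1 : ∀ t : ℝ, 0 < t → HasDerivAt φ (dφ t) t)
    (hd2 : ∀ t : ℝ, 0 < t → HasDerivAt dφ (ddφ t) t)
    (hM1b : ∀ t ∈ Icc (1 / 100 : ℝ) 25, |dφ t| ≤ M1)
    (hM2b : ∀ t ∈ Icc (1 / 100 : ℝ) 25, |ddφ t| ≤ M2)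
    (hφ1 : ∀ t : ℝ, 4 ≤ t → φ t = 1)
    (hφ0 : ∀ t : ℝ, 0 ≤ t → t < 1 / 4 → φ t = 0)
    (x z₀ y : Rd d) (r : ℝ) (hr : 0 < r) (hDr : 4 * r ≤ ‖x - z₀‖)
    (hy : dist y z₀ < r)
    (ε : ℤ → ℝ) (hmono : Antitone ε) (hpos : ∀ m, 0 < ε m) (s : Finset ℤ) :
    ∑ m ∈ s, |(φ (‖x - y‖ ^ 2 / ε (m + 1) ^ 2) * K (x - y) -
        φ (‖x - z₀‖ ^ 2 / ε (m + 1) ^ 2) * K (x - z₀)) -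
      (φ (‖x - y‖ ^ 2 / ε m ^ 2) * K (x - y) -
        φ (‖x - z₀‖ ^ 2 / ε m ^ 2) * K (x - z₀))| ≤
    15 / 4 * (200 * M1 * CK / ((3 / 4 : ℝ) ^ (n + 1)) + 3 * CK * (3200 * M2 + 128 * M1)) * r /
      ‖x - z₀‖ ^ (n + 1) := by
  set D : ℝ := ‖x - z₀‖ with hD
  set a : ℝ := ‖x - y‖ with ha
  have hD0 : 0 < D := by linarith
  have hab : |a - D| ≤ r := by
    have h1 : |a - D| ≤ ‖(x - y) - (x - z₀)‖ := abs_norm_sub_norm_le _ _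
    have h2 : (x - y) - (x - z₀) = z₀ - y := by abel
    rw [h2, ← dist_eq_norm, dist_comm] at h1
    linarith
  have hab' := abs_le.1 hab
  have ha1 : 3 * D / 4 ≤ a := by linarith
  have ha2 : a ≤ 5 * D / 4 := by linarith
  have ha0 : 0 < a := by linarith
  set Cst : ℝ := 200 * M1 * CK / ((3 / 4 : ℝ) ^ (n + 1)) + 3 * CK * (3200 * M2 + 128 * M1)
    with hCst
  have hCst0 : 0 ≤ Cst := by
    have h1 : (0:ℝ) < (3 / 4 : ℝ) ^ (n + 1) := by positivity
    exact add_nonneg (div_nonneg (mul_nonneg (by linarith) hCK.le) h1.le)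
      (mul_nonneg (mul_nonneg (by norm_num) hCK.le) (by linarith))
  have hDn2 : (0:ℝ) < D ^ (n + 2) := pow_pos hD0 _
  have hDn1 : (0:ℝ) < D ^ (n + 1) := pow_pos hD0 _
  set F : ℝ → ℝ := fun u => φ (a ^ 2 / u ^ 2) * K (x - y) - φ (D ^ 2 / u ^ 2) * K (x - z₀)
    with hF
  have hlow : ∀ u : ℝ, 0 < u → u ≤ D / 4 → F u = K (x - y) - K (x - z₀) := by
    intro u hu0 hu
    have h1 : (4:ℝ) ≤ a ^ 2 / u ^ 2 := by
      rw [le_div_iff₀ (by positivity)]; nlinarith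
    have h2 : (4:ℝ) ≤ D ^ 2 / u ^ 2 := by
      rw [le_div_iff₀ (by positivity)]; nlinarith
    simp only [hF, hφ1 _ h1, hφ1 _ h2, one_mul]
  have hhigh : ∀ u : ℝ, 4 * D ≤ u → F u = 0 := by
    intro u hu
    have hu0 : 0 < u := by linarith
    have h1 : a ^ 2 / u ^ 2 < 1 / 4 := by
      rw [div_lt_iff₀ (by positivity)]; nlinarith
    have h2 : D ^ 2 / u ^ 2 < 1 / 4 := by
      rw [div_lt_iff₀ (by positivity)]; nlinarith
    simp only [hF, hφ0 _ (by positivity) h1, hφ0 _ (by positivity) h2, zero_mul, sub_zero]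
  have hkey := keyLip n K φ dφ ddφ CK M1 M2 hCK hM1 hM2 hKdiff hKb hKb' hd1 hd2 hM1b hM2b
    x z₀ y r hr hDr hy
  have hmain : ∑ m ∈ s, |F (ε (m + 1)) - F (ε m)| ≤
      (Cst * r / D ^ (n + 2)) * (4 * D - D / 4) := by
    refine varsum_le (by linarith) (by linarith) (by positivity)
      (fun u hu v hv => hkey u hu v hv)
      (fun u hu0 hu => (hlow u hu0 hu).trans (hlow (D / 4) (by linarith) le_rfl).symm)
      (fun u hu => (hhigh u hu).trans (hhigh (4 * D) le_rfl).symm)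
      ε hmono hpos s
  calc ∑ m ∈ s, |F (ε (m + 1)) - F (ε m)| ≤ (Cst * r / D ^ (n + 2)) * (4 * D - D / 4) := hmain
    _ = 15 / 4 * Cst * r / D ^ (n + 1) := by
        have e2 : D ^ (n + 2) = D ^ (n + 1) * D := pow_succ D (n + 1)
        rw [e2]
        field_simp
        ring

/-- If `ν` is a finite signed measure supported in `B(z₀,r)` with total
mass zero, then `V_ρ(T_φν)(x) ≲ r‖ν‖/|x−z₀|^{n+1}` for `|x−z₀| ≥ 4r`, with a constant
depending only on `n`, `d`, `K`, `φ` and `ρ`. -/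
theorem statement15 (n d : ℕ) (hn : 1 ≤ n) (hnd : n < d) (ρ : ℝ) (hρ : 1 ≤ ρ)
    (K : Rd d → ℝ) (hK : AdmissibleKernel n K) (φ : ℝ → ℝ) (hφ : TruncProfile φ) :
    ∃ C : ℝ, 0 < C ∧ ∀ (ν : SignedMeasure (Rd d)) (z₀ : Rd d) (r : ℝ), 0 < r →
      ν.totalVariation (ball z₀ r)ᶜ = 0 → ν Set.univ = 0 →
      ∀ x : Rd d, 4 * r ≤ dist x z₀ →
        varFam ρ (fun ε => smoothTM K φ ν ε x) ≤
          ENNReal.ofReal (C * r / dist x z₀ ^ (n + 1)) * tvNorm ν := by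
  classical
  obtain ⟨CK, hCK, hKbds⟩ := hK.bounds
  have hKdiff : ∀ z : Rd d, z ≠ 0 → DifferentiableAt ℝ K z := fun z hz =>
    (hK.smooth.differentiableOn (by norm_num)).differentiableAt
      (isOpen_compl_singleton.mem_nhds hz)
  have hKb : ∀ z : Rd d, z ≠ 0 → |K z| ≤ CK / ‖z‖ ^ n := fun z hz => (hKbds z hz).1
  have hKb' : ∀ z : Rd d, z ≠ 0 → ‖fderiv ℝ K z‖ ≤ CK / ‖z‖ ^ (n + 1) := fun z hz =>
    (hKbds z hz).2.1
  have hφIoi : ContDiffOn ℝ 2 φ (Ioi 0) := hφ.smooth.mono Ioi_subset_Ici_self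
  have hd1 : ∀ t : ℝ, 0 < t → HasDerivAt φ (deriv φ t) t := fun t ht =>
    ((hφIoi.differentiableOn (by norm_num)).differentiableAt (isOpen_Ioi.mem_nhds ht)).hasDerivAt
  have hdc : ContDiffOn ℝ 1 (deriv φ) (Ioi 0) :=
    hφIoi.deriv_of_isOpen isOpen_Ioi (by norm_num)
  have hd2 : ∀ t : ℝ, 0 < t → HasDerivAt (deriv φ) (deriv (deriv φ) t) t := fun t ht =>
    ((hdc.differentiableOn (by norm_num)).differentiableAt (isOpen_Ioi.mem_nhds ht)).hasDerivAt
  have hsub : Icc (1 / 100 : ℝ) 25 ⊆ Ioi 0 := fun t ht => lt_of_lt_of_le (by norm_num) ht.1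
  obtain ⟨M1', hM1'⟩ := (isCompact_Icc (a := (1 / 100 : ℝ)) (b := 25)).exists_bound_of_continuousOn
    (hdc.continuousOn.mono hsub)
  obtain ⟨M2', hM2'⟩ := (isCompact_Icc (a := (1 / 100 : ℝ)) (b := 25)).exists_bound_of_continuousOn
    ((hdc.continuousOn_deriv_of_isOpen isOpen_Ioi le_rfl).mono hsub)
  set M1 : ℝ := max M1' 0 with hM1def
  set M2 : ℝ := max M2' 0 with hM2def
  have hM1 : 0 ≤ M1 := le_max_right _ _
  have hM2 : 0 ≤ M2 := le_max_right _ _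
  have hM1b : ∀ t ∈ Icc (1 / 100 : ℝ) 25, |deriv φ t| ≤ M1 := fun t ht =>
    le_trans (by rw [← Real.norm_eq_abs]; exact hM1' t ht) (le_max_left _ _)
  have hM2b : ∀ t ∈ Icc (1 / 100 : ℝ) 25, |deriv (deriv φ) t| ≤ M2 := fun t ht =>
    le_trans (by rw [← Real.norm_eq_abs]; exact hM2' t ht) (le_max_left _ _)
  have hφ1 : ∀ t : ℝ, 4 ≤ t → φ t = 1 := fun t ht =>
    le_antisymm (hφ.le_one t (by linarith)) (hφ.one_le t ht)
  set Cst0 : ℝ := 15 / 4 * (200 * M1 * CK / ((3 / 4 : ℝ) ^ (n + 1)) +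
    3 * CK * (3200 * M2 + 128 * M1)) with hCst0def
  have hc34 : (0:ℝ) < (3 / 4 : ℝ) ^ (n + 1) := by positivity
  have hCst0 : 0 ≤ Cst0 := by
    have h1 : (0:ℝ) ≤ 200 * M1 * CK / ((3 / 4 : ℝ) ^ (n + 1)) :=
      div_nonneg (mul_nonneg (by linarith) hCK.le) hc34.le
    have h2 : (0:ℝ) ≤ 3 * CK * (3200 * M2 + 128 * M1) :=
      mul_nonneg (by linarith) (by linarith)
    rw [hCst0def]; linarith
  refine ⟨Cst0 + 1, by linarith, ?_⟩
  intro ν z₀ r hr hsupp hmass x hx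
  have hD0 : (0:ℝ) < dist x z₀ := lt_of_lt_of_le (by linarith) hx
  have hDN : dist x z₀ = ‖x - z₀‖ := dist_eq_norm x z₀
  set pos := ν.toJordanDecomposition.posPart with hposdef
  set neg := ν.toJordanDecomposition.negPart with hnegdef
  set S : Set (Rd d) := ball z₀ r with hSdef
  have hSm : MeasurableSet S := measurableSet_ball
  have htv : ν.totalVariation = pos + neg := rfl
  have hS0 : pos Sᶜ = 0 ∧ neg Sᶜ = 0 := by
    have h := hsupp
    rw [htv, Measure.add_apply, add_eq_zero] at h
    exact h
  have haepos : ∀ᵐ y ∂pos, y ∈ S := by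
    rw [ae_iff]
    exact hS0.1
  have haeneg : ∀ᵐ y ∂neg, y ∈ S := by
    rw [ae_iff]
    exact hS0.2
  -- basic geometry on S
  have hySfacts : ∀ y ∈ S, 3 * r ≤ ‖x - y‖ := by
    intro y hyS
    have h1 : |‖x - y‖ - ‖x - z₀‖| ≤ ‖(x - y) - (x - z₀)‖ := abs_norm_sub_norm_le _ _
    have h2 : (x - y) - (x - z₀) = z₀ - y := by abel
    rw [h2] at h1
    have h3 : ‖z₀ - y‖ < r := by
      rw [← dist_eq_norm, dist_comm]
      exact mem_ball.mp hyS
    have h4 := abs_le.1 (h1.trans h3.le)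
    rw [← hDN] at h4
    linarith [h4.1]
  have hySne : ∀ y ∈ S, (x - y : Rd d) ≠ 0 := fun y hyS =>
    norm_pos_iff.mp (lt_of_lt_of_le (by linarith) (hySfacts y hyS))
  -- integrability
  have hInt : ∀ (μ : Measure (Rd d)), IsFiniteMeasure μ → μ Sᶜ = 0 → ∀ ε : ℝ,
      Integrable (fun y => φ (‖x - y‖ ^ 2 / ε ^ 2) * K (x - y)) μ := by
    intro μ hfin hμS ε
    haveI := hfin
    have hae : ∀ᵐ y ∂μ, y ∈ S := by rw [ae_iff]; exact hμS
    have hres : μ.restrict S = μ := Measure.restrict_eq_self_of_ae_mem hae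
    have hcont : ContinuousOn (fun y : Rd d => φ (‖x - y‖ ^ 2 / ε ^ 2) * K (x - y)) S := by
      have hsub : Continuous (fun y : Rd d => x - y) := continuous_const.sub continuous_id
      have hc1 : ContinuousOn (fun y : Rd d => K (x - y)) S := by
        refine (hK.smooth.continuousOn).comp hsub.continuousOn ?_
        intro y hyS
        exact hySne y hyS
      have hinner : Continuous (fun y : Rd d => ‖x - y‖ ^ 2 / ε ^ 2) :=
        ((hsub.norm.pow 2).div_const _)
      have hc2 : ContinuousOn (fun y : Rd d => φ (‖x - y‖ ^ 2 / ε ^ 2)) S := by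
        refine (hφ.smooth.continuousOn).comp hinner.continuousOn ?_
        exact fun y _ => Set.mem_Ici.mpr (div_nonneg (sq_nonneg _) (sq_nonneg _))
      exact hc2.mul hc1
    have hasm : AEStronglyMeasurable (fun y : Rd d => φ (‖x - y‖ ^ 2 / ε ^ 2) * K (x - y)) μ := by
      rw [← hres]
      exact hcont.aestronglyMeasurable hSm
    refine Integrable.mono' (integrable_const (CK / (3 * r) ^ n)) hasm ?_
    refine hae.mono fun y hyS => ?_
    have h1 : |φ (‖x - y‖ ^ 2 / ε ^ 2)| ≤ 1 := by
      have harg : (0:ℝ) ≤ ‖x - y‖ ^ 2 / ε ^ 2 := div_nonneg (by positivity) (by positivity)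
      rw [abs_le]
      exact ⟨by linarith [hφ.nonneg _ harg], hφ.le_one _ harg⟩
    have h2 : |K (x - y)| ≤ CK / (3 * r) ^ n := by
      refine le_trans (hKb _ (hySne y hyS)) ?_
      have h3 : (0:ℝ) < 3 * r := by linarith
      have h4 := hySfacts y hyS
      rw [div_le_div_iff₀ (pow_pos (lt_of_lt_of_le h3 h4) _) (pow_pos h3 _)]
      exact mul_le_mul_of_nonneg_left (pow_le_pow_left₀ h3.le h4 _) hCK.le
    rw [Real.norm_eq_abs, abs_mul]
    calc |φ (‖x - y‖ ^ 2 / ε ^ 2)| * |K (x - y)| ≤ 1 * (CK / (3 * r) ^ n) :=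
        mul_le_mul h1 h2 (abs_nonneg _) zero_le_one
      _ = CK / (3 * r) ^ n := one_mul _
  have hIntPos : ∀ ε : ℝ, Integrable (fun y => φ (‖x - y‖ ^ 2 / ε ^ 2) * K (x - y)) pos :=
    hInt pos inferInstance hS0.1
  have hIntNeg : ∀ ε : ℝ, Integrable (fun y => φ (‖x - y‖ ^ 2 / ε ^ 2) * K (x - y)) neg :=
    hInt neg inferInstance hS0.2
  -- equal masses
  have hmassId : (pos univ).toReal = (neg univ).toReal := by
    have h2 : ν univ = (pos univ).toReal - (neg univ).toReal := by
      conv_lhs => rw [← ν.toSignedMeasure_toJordanDecomposition]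
      rw [JordanDecomposition.toSignedMeasure]
      exact Measure.toSignedMeasure_sub_apply MeasurableSet.univ
    rw [hmass] at h2
    linarith
  -- definitions
  set Hy : Rd d → ℝ → ℝ := fun y u => φ (‖x - y‖ ^ 2 / u ^ 2) * K (x - y) -
    φ (‖x - z₀‖ ^ 2 / u ^ 2) * K (x - z₀) with hHydef
  have hIntHpos : ∀ u : ℝ, Integrable (fun y => Hy y u) pos := fun u =>
    (hIntPos u).sub (integrable_const _)
  have hIntHneg : ∀ u : ℝ, Integrable (fun y => Hy y u) neg := fun u =>
    (hIntNeg u).sub (integrable_const _)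
  have hFH : ∀ u : ℝ, smoothTM K φ ν u x = (∫ y, Hy y u ∂pos) - ∫ y, Hy y u ∂neg := by
    intro u
    have e1 : ∫ y, Hy y u ∂pos = (∫ y, φ (‖x - y‖ ^ 2 / u ^ 2) * K (x - y) ∂pos) -
        (pos univ).toReal * (φ (‖x - z₀‖ ^ 2 / u ^ 2) * K (x - z₀)) := by
      rw [hHydef]
      rw [integral_sub (hIntPos u) (integrable_const _), integral_const, smul_eq_mul, measureReal_def]
    have e2 : ∫ y, Hy y u ∂neg = (∫ y, φ (‖x - y‖ ^ 2 / u ^ 2) * K (x - y) ∂neg) -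
        (neg univ).toReal * (φ (‖x - z₀‖ ^ 2 / u ^ 2) * K (x - z₀)) := by
      rw [hHydef]
      rw [integral_sub (hIntNeg u) (integrable_const _), integral_const, smul_eq_mul, measureReal_def]
    rw [e1, e2, hmassId]
    show (∫ y, φ (‖x - y‖ ^ 2 / u ^ 2) * K (x - y) ∂pos) -
      (∫ y, φ (‖x - y‖ ^ 2 / u ^ 2) * K (x - y) ∂neg) = _
    ring
  set Bnd : ℝ := Cst0 * r / ‖x - z₀‖ ^ (n + 1) with hBnddef
  have hBnd0 : 0 ≤ Bnd := by
    rw [hBnddef]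
    have : (0:ℝ) < ‖x - z₀‖ ^ (n + 1) := pow_pos (by rw [← hDN]; exact hD0) _
    exact div_nonneg (mul_nonneg hCst0 hr.le) this.le
  -- finite sum bound
  have hsum : ∀ (ε : ℤ → ℝ), StrictAnti ε → (∀ m, 0 < ε m) → ∀ s : Finset ℤ,
      ∑ m ∈ s, |smoothTM K φ ν (ε (m + 1)) x - smoothTM K φ ν (ε m) x| ≤
        Bnd * ((pos univ).toReal + (neg univ).toReal) := by
    intro ε hanti hpos' s
    have hterm : ∀ m : ℤ, |smoothTM K φ ν (ε (m + 1)) x - smoothTM K φ ν (ε m) x| ≤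
        (∫ y, |Hy y (ε (m + 1)) - Hy y (ε m)| ∂pos) +
        ∫ y, |Hy y (ε (m + 1)) - Hy y (ε m)| ∂neg := by
      intro m
      rw [hFH (ε (m + 1)), hFH (ε m)]
      have e3 : (∫ y, Hy y (ε (m + 1)) ∂pos) - (∫ y, Hy y (ε (m + 1)) ∂neg) -
          ((∫ y, Hy y (ε m) ∂pos) - ∫ y, Hy y (ε m) ∂neg) =
          (∫ y, (Hy y (ε (m + 1)) - Hy y (ε m)) ∂pos) -
          ∫ y, (Hy y (ε (m + 1)) - Hy y (ε m)) ∂neg := by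
        rw [integral_sub (hIntHpos _) (hIntHpos _), integral_sub (hIntHneg _) (hIntHneg _)]
        ring
      rw [e3]
      have h4 : ∀ (μ : Measure (Rd d)), |∫ y, (Hy y (ε (m + 1)) - Hy y (ε m)) ∂μ| ≤
          ∫ y, |Hy y (ε (m + 1)) - Hy y (ε m)| ∂μ := by
        intro μ
        have := norm_integral_le_integral_norm (μ := μ)
          (f := fun y => Hy y (ε (m + 1)) - Hy y (ε m))
        simpa [Real.norm_eq_abs] using this
      calc |(∫ y, (Hy y (ε (m + 1)) - Hy y (ε m)) ∂pos) -
            ∫ y, (Hy y (ε (m + 1)) - Hy y (ε m)) ∂neg| ≤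
          |∫ y, (Hy y (ε (m + 1)) - Hy y (ε m)) ∂pos| +
          |∫ y, (Hy y (ε (m + 1)) - Hy y (ε m)) ∂neg| := abs_sub _ _
        _ ≤ _ := add_le_add (h4 pos) (h4 neg)
    have hIntAbsPos : ∀ m : ℤ, Integrable (fun y => |Hy y (ε (m + 1)) - Hy y (ε m)|) pos :=
      fun m => ((hIntHpos _).sub (hIntHpos _)).abs
    have hIntAbsNeg : ∀ m : ℤ, Integrable (fun y => |Hy y (ε (m + 1)) - Hy y (ε m)|) neg :=
      fun m => ((hIntHneg _).sub (hIntHneg _)).abs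
    have hptw : ∀ y ∈ S, ∑ m ∈ s, |Hy y (ε (m + 1)) - Hy y (ε m)| ≤ Bnd := by
      intro y hyS
      have := pointBound n K φ (deriv φ) (deriv (deriv φ)) CK M1 M2 hCK hM1 hM2
        hKdiff hKb hKb' hd1 hd2 hM1b hM2b hφ1 hφ.eq_zero x z₀ y r hr
        (by rw [← hDN]; exact hx) (mem_ball.mp hyS) ε hanti.antitone hpos' s
      rw [hBnddef, hCst0def]
      exact this
    have hintB : ∀ (μ : Measure (Rd d)), IsFiniteMeasure μ → (∀ᵐ y ∂μ, y ∈ S) →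
        (∀ m : ℤ, Integrable (fun y => |Hy y (ε (m + 1)) - Hy y (ε m)|) μ) →
        ∫ y, (∑ m ∈ s, |Hy y (ε (m + 1)) - Hy y (ε m)|) ∂μ ≤ Bnd * (μ univ).toReal := by
      intro μ hfin hae hint
      haveI := hfin
      have h5 : ∫ y, (∑ m ∈ s, |Hy y (ε (m + 1)) - Hy y (ε m)|) ∂μ ≤ ∫ _, Bnd ∂μ := by
        refine integral_mono_ae (integrable_finset_sum s fun m _ => hint m)
          (integrable_const _) ?_
        exact hae.mono fun y hyS => hptw y hyS
      rw [integral_const, smul_eq_mul, mul_comm] at h5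
      exact h5
    calc ∑ m ∈ s, |smoothTM K φ ν (ε (m + 1)) x - smoothTM K φ ν (ε m) x|
        ≤ ∑ m ∈ s, ((∫ y, |Hy y (ε (m + 1)) - Hy y (ε m)| ∂pos) +
          ∫ y, |Hy y (ε (m + 1)) - Hy y (ε m)| ∂neg) :=
          Finset.sum_le_sum fun m _ => hterm m
      _ = (∫ y, (∑ m ∈ s, |Hy y (ε (m + 1)) - Hy y (ε m)|) ∂pos) +
          ∫ y, (∑ m ∈ s, |Hy y (ε (m + 1)) - Hy y (ε m)|) ∂neg := by
          rw [Finset.sum_add_distrib,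
            integral_finset_sum s (fun m _ => hIntAbsPos m),
            integral_finset_sum s (fun m _ => hIntAbsNeg m)]
      _ ≤ Bnd * (pos univ).toReal + Bnd * (neg univ).toReal :=
          add_le_add (hintB pos inferInstance haepos hIntAbsPos)
            (hintB neg inferInstance haeneg hIntAbsNeg)
      _ = Bnd * ((pos univ).toReal + (neg univ).toReal) := by ring
  -- pass to ENNReal
  haveI hfintv : IsFiniteMeasure ν.totalVariation := by
    rw [htv]; infer_instance
  have hofReal : ENNReal.ofReal (Bnd * ((pos univ).toReal + (neg univ).toReal)) ≤
      ENNReal.ofReal ((Cst0 + 1) * r / dist x z₀ ^ (n + 1)) * tvNorm ν := by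
    rw [ENNReal.ofReal_mul hBnd0]
    refine mul_le_mul' (ENNReal.ofReal_le_ofReal ?_) ?_
    · rw [hBnddef, hDN]
      have hpow : (0:ℝ) < ‖x - z₀‖ ^ (n + 1) := pow_pos (by rw [← hDN]; exact hD0) _
      rw [div_le_div_iff₀ hpow hpow]
      nlinarith [mul_nonneg hr.le hpow.le]
    · rw [ENNReal.ofReal_add ENNReal.toReal_nonneg ENNReal.toReal_nonneg]
      have h6 : tvNorm ν = pos univ + neg univ := by
        rw [tvNorm, htv]; rfl
      rw [h6]
      exact add_le_add ENNReal.ofReal_toReal_le ENNReal.ofReal_toReal_le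
  have hTne : ENNReal.ofReal ((Cst0 + 1) * r / dist x z₀ ^ (n + 1)) * tvNorm ν ≠ ⊤ := by
    refine ENNReal.mul_ne_top ENNReal.ofReal_ne_top ?_
    rw [tvNorm]
    exact measure_ne_top _ _
  rw [varFam]
  refine iSup_le fun ε => iSup_le fun hanti => iSup_le fun hpos' => ?_
  set SS : ℝ≥0∞ := ∑' m : ℤ,
    ENNReal.ofReal ‖smoothTM K φ ν (ε (m + 1)) x - smoothTM K φ ν (ε m) x‖ with hSSdef
  have hSS : SS ≤ ENNReal.ofReal ((Cst0 + 1) * r / dist x z₀ ^ (n + 1)) * tvNorm ν := by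
    rw [hSSdef, ENNReal.tsum_eq_iSup_sum]
    refine iSup_le fun s => ?_
    rw [← ENNReal.ofReal_sum_of_nonneg (fun m _ => norm_nonneg _)]
    refine le_trans (ENNReal.ofReal_le_ofReal ?_) hofReal
    have := hsum ε hanti hpos' s
    simpa [Real.norm_eq_abs] using this
  have hρ0 : (0:ℝ) < ρ := by linarith
  have hSSne : SS ≠ ⊤ := fun h => hTne (top_le_iff.mp (h ▸ hSS))
  have hmainr : (∑' m : ℤ,
      ENNReal.ofReal ‖smoothTM K φ ν (ε (m + 1)) x - smoothTM K φ ν (ε m) x‖ ^ ρ) ^ (1 / ρ) ≤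
      SS := by
    rcases eq_or_ne SS 0 with h0 | h0
    · have hz : ∀ m : ℤ,
          ENNReal.ofReal ‖smoothTM K φ ν (ε (m + 1)) x - smoothTM K φ ν (ε m) x‖ = 0 :=
        fun m => le_antisymm (h0 ▸ ENNReal.le_tsum m) zero_le
      have hzz : ∑' m : ℤ,
          ENNReal.ofReal ‖smoothTM K φ ν (ε (m + 1)) x - smoothTM K φ ν (ε m) x‖ ^ ρ = 0 := by
        simp only [hz, ENNReal.zero_rpow_of_pos hρ0, tsum_zero]
      rw [hzz, ENNReal.zero_rpow_of_pos (by positivity)]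
      exact zero_le
    · have hle : ∑' m : ℤ,
          ENNReal.ofReal ‖smoothTM K φ ν (ε (m + 1)) x - smoothTM K φ ν (ε m) x‖ ^ ρ ≤
          SS ^ ρ := by
        have hstep : ∀ m : ℤ,
            ENNReal.ofReal ‖smoothTM K φ ν (ε (m + 1)) x - smoothTM K φ ν (ε m) x‖ ^ ρ ≤
            ENNReal.ofReal ‖smoothTM K φ ν (ε (m + 1)) x - smoothTM K φ ν (ε m) x‖ *
              SS ^ (ρ - 1) := by
          intro m
          set am := ENNReal.ofReal ‖smoothTM K φ ν (ε (m + 1)) x - smoothTM K φ ν (ε m) x‖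
          rcases eq_or_ne am 0 with ham | ham
          · rw [ham, ENNReal.zero_rpow_of_pos hρ0, zero_mul]
          · have : am ^ ρ = am ^ (1:ℝ) * am ^ (ρ - 1) := by
              rw [← ENNReal.rpow_add _ _ ham ENNReal.ofReal_ne_top]
              norm_num
            rw [this, ENNReal.rpow_one]
            exact mul_le_mul' le_rfl
              (ENNReal.rpow_le_rpow (ENNReal.le_tsum m) (by linarith))
        calc ∑' m : ℤ,
            ENNReal.ofReal ‖smoothTM K φ ν (ε (m + 1)) x - smoothTM K φ ν (ε m) x‖ ^ ρ
            ≤ ∑' m : ℤ,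
              ENNReal.ofReal ‖smoothTM K φ ν (ε (m + 1)) x - smoothTM K φ ν (ε m) x‖ *
                SS ^ (ρ - 1) := ENNReal.tsum_le_tsum hstep
          _ = SS * SS ^ (ρ - 1) := by rw [ENNReal.tsum_mul_right, ← hSSdef]
          _ = SS ^ (1:ℝ) * SS ^ (ρ - 1) := by rw [ENNReal.rpow_one]
          _ = SS ^ ρ := by
              rw [← ENNReal.rpow_add _ _ h0 hSSne]
              norm_num
      calc (∑' m : ℤ,
          ENNReal.ofReal ‖smoothTM K φ ν (ε (m + 1)) x - smoothTM K φ ν (ε m) x‖ ^ ρ) ^ (1 / ρ)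
          ≤ (SS ^ ρ) ^ (1 / ρ) := ENNReal.rpow_le_rpow hle (by positivity)
        _ = SS := by
            rw [← ENNReal.rpow_mul, mul_one_div_cancel hρ0.ne', ENNReal.rpow_one]
  exact le_trans hmainr hSS


end
end
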